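/- There is no continuously differentiable function w : ℝ → ℝ such that w(t) ≠ 0 for all t ∈ ℝ, the functions w, 1/w and ẇ are all bounded on ℝ, and ẇ(t) = −2 w(t) for all t ∈ ℝ. Equivalently, there is no scalar Lyapunov transformation w taking the time-invariant scalar system Q = 1 to Q̂ = −1 via (w(t)·Q + ẇ(t))·w(t)⁻¹ = Q̂. -/

import Mathlib

theorem stmt16 :
    ¬ ∃ w : ℝ → ℝ, ContDiff ℝ 1 w ∧ (∀ t : ℝ, w t ≠ 0) ∧
      (∃ c : ℝ, ∀ t : ℝ, |w t| ≤ c) ∧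
      (∃ c : ℝ, ∀ t : ℝ, |1 / w t| ≤ c) ∧
      (∃ c : ℝ, ∀ t : ℝ, |deriv w t| ≤ c) ∧
      (∀ t : ℝ, deriv w t = -2 * w t) := by
  rintro ⟨w, hw, hne, ⟨c, hc⟩, -, -, hode⟩
  have hdw : Differentiable ℝ w := hw.differentiable one_ne_zero
  -- g t = w t * exp (2 t) has zero derivative, hence is constant
  set g : ℝ → ℝ := fun t => w t * Real.exp (2 * t) with hg
  have hgd : ∀ t, HasDerivAt g 0 t := by
    intro t
    have h1 : HasDerivAt w (deriv w t) t := (hdw t).hasDerivAt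
    have h2 : HasDerivAt (fun t : ℝ => Real.exp (2 * t)) (Real.exp (2 * t) * 2) t := by
      simpa using ((hasDerivAt_id t).const_mul 2).exp
    have := h1.mul h2
    exact this.congr_deriv (by rw [hode t]; ring)
  have hconst : ∀ t : ℝ, g t = g 0 := by
    intro t
    have : g = fun _ => g 0 := by
      funext s
      exact (is_const_of_deriv_eq_zero (fun x => (hgd x).differentiableAt)
        (fun x => (hgd x).deriv) s 0)
    rw [this]
  have hwt : ∀ t : ℝ, w t = w 0 * Real.exp (-(2 * t)) := by
    intro t
    have h := hconst t
    simp only [hg] at h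
    field_simp [Real.exp_ne_zero] at h ⊢
    rw [Real.exp_neg]
    field_simp
    simp at h; linarith [h]
  -- blow up as t → -∞
  have hw0 : 0 < |w 0| := abs_pos.mpr (hne 0)
  obtain ⟨n, hn⟩ := exists_nat_gt (c / |w 0|)
  have ht := hc (-(n : ℝ))
  rw [hwt (-(n : ℝ))] at ht
  have hexp : (n : ℝ) + 1 ≤ Real.exp (-(2 * -(n : ℝ))) := by
    have : (2 : ℝ) * (n : ℝ) + 1 ≤ Real.exp (2 * n) := by
      have := Real.add_one_le_exp (2 * (n : ℝ))
      linarith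
    have h2 : -(2 * -(n : ℝ)) = 2 * n := by ring
    rw [h2]
    push_cast
    linarith [this, Nat.cast_nonneg (α := ℝ) n]
  have : |w 0 * Real.exp (-(2 * -(n : ℝ)))| = |w 0| * Real.exp (-(2 * -(n : ℝ))) := by
    rw [abs_mul, abs_of_pos (Real.exp_pos _)]
  rw [this] at ht
  have hlt : c < |w 0| * ((n : ℝ) + 1) := by
    have h1 : c < |w 0| * n := by
      rw [div_lt_iff₀ hw0] at hn; linarith [hn]
    nlinarith
  nlinarith [mul_le_mul_of_nonneg_left hexp (le_of_lt hw0)]
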